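/- Let N ≥ 1, m ≥ 1, let u : Fin m → (ZMod N → ZMod 4) and κ : Fin m → ZMod 4, and define the 4^m-QAM sequence s(t) = (1+i) · ∑_{k=0}^{m−1} 2^k · i^{u_k(t)} · i^{κ_k}. Suppose that for all k ≠ l one has |θ_{u_k,u_l}(0)| ≤ 1 + √(N+1). Then the energy of s satisfies |∑_{t ∈ ZMod N} |s(t)|² − (2/3)·(4^m − 1)·N| ≤ 2·((2^m − 1)² − (4^m − 1)/3)·(1 + √(N+1)). -/

import Mathlib

/-- For `a ∈ ZMod 4`, the complex number `i^a := Complex.I ^ a.val`. -/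
noncomputable def zi (a : ZMod 4) : ℂ := Complex.I ^ a.val

/-- Periodic correlation of complex sequences of period `N` at shift `τ`:
`θ_{s,s'}(τ) = ∑_t s(t+τ) · conj (s'(t))`. -/
noncomputable def pcorr {N : ℕ} [NeZero N] (s s' : ZMod N → ℂ) (τ : ZMod N) : ℂ :=
  ∑ t : ZMod N, s (t + τ) * (starRingEnd ℂ) (s' t)

/-- Periodic correlation of quaternary sequences of period `N` at shift `τ`:
`θ_{u,v}(τ) = ∑_t i^{u(t+τ)} · conj (i^{v(t)})`. -/
noncomputable def qcorr {N : ℕ} [NeZero N] (u v : ZMod N → ZMod 4) (τ : ZMod N) : ℂ :=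
  ∑ t : ZMod N, zi (u (t + τ)) * (starRingEnd ℂ) (zi (v t))

open Finset

lemma zi_abs (a : ZMod 4) : ‖zi a‖ = 1 := by
  simp [zi]

lemma zi_mul_conj (a : ZMod 4) : zi a * (starRingEnd ℂ) (zi a) = 1 := by
  rw [Complex.mul_conj]
  norm_cast
  rw [Complex.normSq_eq_norm_sq, zi_abs]; norm_num

/-- Energy of a `4^m`-QAM sequence built from quaternary components whose
pairwise (distinct-index) zero-shift correlations are bounded by `1 + √(N+1)`:
the energy deviates from `(2/3)(4^m - 1)N` by at most
`2((2^m - 1)² - (4^m - 1)/3)(1 + √(N+1))`. -/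
theorem qam_sequence_energy_bound (N m : ℕ) [NeZero N] (hm : 1 ≤ m)
    (u : Fin m → ZMod N → ZMod 4) (κ : Fin m → ZMod 4)
    (hcorr : ∀ k l : Fin m, k ≠ l →
      ‖qcorr (u k) (u l) 0‖ ≤ 1 + Real.sqrt (N + 1)) :
    |(∑ t : ZMod N,
        ‖(1 + Complex.I) *
          ∑ k : Fin m, (2 : ℂ) ^ (k : ℕ) * zi (u k t) * zi (κ k)‖ ^ 2)
      - (2 / 3) * (4 ^ m - 1) * N|
    ≤ 2 * ((2 ^ m - 1) ^ 2 - (4 ^ m - 1) / 3) * (1 + Real.sqrt (N + 1)) := by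
  set B := 1 + Real.sqrt (N + 1) with hBdef
  have hB0 : (0:ℝ) ≤ B := by positivity
  set f : ZMod N → ℂ := fun t => ∑ k : Fin m, (2:ℂ)^(k:ℕ) * zi (u k t) * zi (κ k) with hf
  have habs : ∀ t, ‖(1+Complex.I) * f t‖^2 = 2 * Complex.normSq (f t) := by
    intro t
    rw [norm_mul, mul_pow, Complex.sq_norm, Complex.sq_norm]
    have h2 : Complex.normSq (1 + Complex.I) = 2 := by
      simp [Complex.normSq_apply]; norm_num
    rw [h2]
  set X : Fin m → Fin m → ℂ := fun k l =>
    ((2:ℂ)^(k:ℕ) * (2:ℂ)^(l:ℕ)) * (zi (κ k) * (starRingEnd ℂ) (zi (κ l))) *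
      qcorr (u k) (u l) 0 with hX
  set Sr : ℝ := ∑ t : ZMod N, Complex.normSq (f t) with hSr
  have key : (Sr : ℂ) = ∑ k, ∑ l, X k l := by
    rw [hSr]
    push_cast
    calc ∑ t : ZMod N, (Complex.normSq (f t) : ℂ)
        = ∑ t : ZMod N, ∑ k : Fin m, ∑ l : Fin m,
            ((2:ℂ)^(k:ℕ) * zi (u k t) * zi (κ k)) *
              (starRingEnd ℂ) ((2:ℂ)^(l:ℕ) * zi (u l t) * zi (κ l)) := by
          refine Finset.sum_congr rfl fun t _ => ?_
          rw [← Complex.mul_conj, hf, map_sum, Finset.sum_mul_sum]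
      _ = ∑ k : Fin m, ∑ t : ZMod N, ∑ l : Fin m,
            ((2:ℂ)^(k:ℕ) * zi (u k t) * zi (κ k)) *
              (starRingEnd ℂ) ((2:ℂ)^(l:ℕ) * zi (u l t) * zi (κ l)) := Finset.sum_comm
      _ = ∑ k : Fin m, ∑ l : Fin m, ∑ t : ZMod N,
            ((2:ℂ)^(k:ℕ) * zi (u k t) * zi (κ k)) *
              (starRingEnd ℂ) ((2:ℂ)^(l:ℕ) * zi (u l t) * zi (κ l)) :=
          Finset.sum_congr rfl fun k _ => Finset.sum_comm
      _ = ∑ k, ∑ l, X k l := by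
          refine Finset.sum_congr rfl fun k _ => Finset.sum_congr rfl fun l _ => ?_
          rw [hX]
          unfold qcorr
          simp only [add_zero]
          rw [Finset.mul_sum]
          refine Finset.sum_congr rfl fun t _ => ?_
          have h2c : (starRingEnd ℂ) 2 = 2 := Complex.conj_eq_iff_im.mpr (by norm_num)
          simp only [map_mul, map_pow, h2c]
          ring
  have hq : ∀ k, qcorr (u k) (u k) 0 = (N:ℂ) := by
    intro k
    unfold qcorr
    simp only [add_zero, zi_mul_conj]
    simp [Finset.card_univ]
  have hdiag : ∀ k, X k k = (4:ℂ)^(k:ℕ) * N := by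
    intro k
    rw [hX]
    dsimp only
    rw [hq k, zi_mul_conj, mul_one, ← mul_pow]
    norm_num
  have hsplit : ∑ k, ∑ l, X k l
      = (∑ k : Fin m, (4:ℂ)^(k:ℕ)) * N + ∑ k, ∑ l ∈ Finset.univ.erase k, X k l := by
    rw [Finset.sum_mul, ← Finset.sum_add_distrib]
    refine Finset.sum_congr rfl fun k _ => ?_
    rw [← hdiag k, Finset.add_sum_erase _ _ (Finset.mem_univ k)]
  set E : ℂ := ∑ k, ∑ l ∈ Finset.univ.erase k, X k l with hE
  set Dr : ℝ := (∑ k : Fin m, (4:ℝ)^(k:ℕ)) * N with hDr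
  have hDrC : (Dr : ℂ) = (∑ k : Fin m, (4:ℂ)^(k:ℕ)) * N := by
    rw [hDr]; push_cast; ring
  have hre : Sr - Dr = E.re := by
    have h := key.trans hsplit
    rw [← hDrC] at h
    have := congrArg Complex.re h
    simp [Complex.add_re, Complex.ofReal_re] at this
    linarith
  -- bound on E
  have hEbound : ‖E‖ ≤ (∑ k : Fin m, ∑ l ∈ Finset.univ.erase k,
      (2:ℝ)^(k:ℕ) * 2^(l:ℕ)) * B := by
    rw [Finset.sum_mul]
    refine (norm_sum_le _ _).trans (Finset.sum_le_sum fun k _ => ?_)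
    rw [Finset.sum_mul]
    refine (norm_sum_le _ _).trans (Finset.sum_le_sum fun l hl => ?_)
    have hkl : k ≠ l := (Finset.ne_of_mem_erase hl).symm
    rw [hX]
    dsimp only
    rw [norm_mul, norm_mul]
    have h1 : ‖(2:ℂ)^(k:ℕ) * (2:ℂ)^(l:ℕ)‖ = (2:ℝ)^(k:ℕ) * 2^(l:ℕ) := by
      rw [norm_mul, norm_pow, norm_pow, Complex.norm_two]
    have h2 : ‖zi (κ k) * (starRingEnd ℂ) (zi (κ l))‖ = 1 := by
      rw [norm_mul, Complex.norm_conj, zi_abs, zi_abs, one_mul]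
    rw [h1, h2, mul_one]
    have := hcorr k l hkl
    exact mul_le_mul_of_nonneg_left this (by positivity)
  have hgeom2 : ∑ k : Fin m, (2:ℝ)^(k:ℕ) = 2^m - 1 := by
    rw [Fin.sum_univ_eq_sum_range, geom_sum_eq (by norm_num)]
    norm_num
  have hgeom4 : ∑ k : Fin m, (4:ℝ)^(k:ℕ) = (4^m - 1)/3 := by
    rw [Fin.sum_univ_eq_sum_range, geom_sum_eq (by norm_num)]
    norm_num
  have hsum2 : ∑ k : Fin m, ∑ l ∈ Finset.univ.erase k, (2:ℝ)^(k:ℕ) * 2^(l:ℕ)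
      = (2^m - 1)^2 - (4^m - 1)/3 := by
    have : ∀ k : Fin m, ∑ l ∈ Finset.univ.erase k, (2:ℝ)^(k:ℕ) * 2^(l:ℕ)
        = (2:ℝ)^(k:ℕ) * (∑ l : Fin m, (2:ℝ)^(l:ℕ)) - (4:ℝ)^(k:ℕ) := by
      intro k
      rw [← Finset.mul_sum, Finset.sum_erase_eq_sub (Finset.mem_univ k), mul_sub,
        ← mul_pow]
      norm_num
    rw [Finset.sum_congr rfl fun k _ => this k, Finset.sum_sub_distrib,
      ← Finset.sum_mul, hgeom2, hgeom4]
    ring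
  -- final
  have hLHS : ∑ t : ZMod N,
      ‖(1 + Complex.I) * f t‖ ^ 2 = 2 * Sr := by
    rw [hSr, Finset.mul_sum]
    exact Finset.sum_congr rfl fun t _ => habs t
  rw [hLHS]
  have h23 : (2:ℝ)/3 * (4^m - 1) * N = 2 * Dr := by
    rw [hDr, hgeom4]; ring
  rw [h23]
  have : 2 * Sr - 2 * Dr = 2 * E.re := by rw [mul_comm 2 Sr]; linarith [hre]
  rw [this, abs_mul, abs_two]
  have hre_le : |E.re| ≤ ‖E‖ := Complex.abs_re_le_norm E
  calc 2 * |E.re| ≤ 2 * ‖E‖ := by linarith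
    _ ≤ 2 * ((∑ k : Fin m, ∑ l ∈ Finset.univ.erase k, (2:ℝ)^(k:ℕ) * 2^(l:ℕ)) * B) := by
        linarith [hEbound]
    _ = 2 * ((2 ^ m - 1) ^ 2 - (4 ^ m - 1) / 3) * B := by rw [hsum2]; ring
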